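/- Let X be a random variable with absolutely continuous, strictly increasing cdf F_X on ℝ, let T be a volatility proxy transformation with change point μ_T and profile g_T, set δ = F_X(μ_T), and let 𝒱 be given by 𝒱(u) = F_X(μ_T + g_T(μ_T − F_X⁻¹(u))) − u for u ≤ δ and 𝒱(u) = u − F_X(μ_T − g_T⁻¹(F_X⁻¹(u) − μ_T)) for u > δ. Then: (1) 𝒱(0) = 𝒱(1) = 1; (2) 𝒱(δ) = 0; (3) 𝒱 is continuous on [0,1]; (4) 𝒱 is strictly decreasing on [0,δ] and strictly increasing on [δ,1]; (5) every u ∈ [0,1]\{δ} has a dual point u* on the opposite side of δ with 𝒱(u*) = 𝒱(u) and |u* − u| = 𝒱(u). -/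

import Mathlib

/-!
STATEMENT 12: the transform `𝒱` constructed from a distribution `F_X` and a
volatility proxy transformation `T` (change point `μ_T`, profile `g_T`) has the
five v-transform properties with fulcrum `δ = F_X(μ_T)`.
(The endpoint values `𝒱(0) = 𝒱(1) = 1` are the limiting values of the two
branches of the construction, since `F_X⁻¹` is only defined on `(0,1)`.)
-/

open Set MeasureTheory

open Set MeasureTheory Filter Topology

private lemma stmt12_mono_cont {g h : ℝ → ℝ} (hm : StrictMonoOn g (Ici 0)) (hg0 : g 0 = 0)
    (hsec : ∀ y ∈ Ici (0:ℝ), 0 ≤ h y ∧ g (h y) = y) :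
    (∀ a : ℝ, 0 < a → ContinuousAt g a) ∧ ContinuousWithinAt g (Ici 0) 0 ∧
      Tendsto g atTop atTop := by
  have mono' : MonotoneOn g (Ici 0) := hm.monotoneOn
  refine ⟨fun a ha => ?_, ?_, ?_⟩
  · have haI : a ∈ Ici (0:ℝ) := le_of_lt ha
    have hga : 0 < g a := by
      have := hm self_mem_Ici haI ha
      rwa [hg0] at this
    refine hm.continuousAt_of_exists_between (Ici_mem_nhds ha) (fun b hb => ?_) (fun b hb => ?_)
    · exact ⟨h (max b 0), (hsec _ (le_max_right b 0)).1,
        by rw [(hsec _ (le_max_right b 0)).2]; exact le_max_left b 0,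
        by rw [(hsec _ (le_max_right b 0)).2]; exact max_lt hb hga⟩
    · have hb0 : (0:ℝ) ≤ b := (hga.le).trans hb.le
      exact ⟨h b, (hsec _ hb0).1, by rw [(hsec _ hb0).2]; exact hb,
        le_of_eq (hsec _ hb0).2⟩
  · refine hm.continuousWithinAt_right_of_exists_between self_mem_nhdsWithin (fun b hb => ?_)
    have hb0 : (0:ℝ) ≤ b := by rw [hg0] at hb; exact hb.le
    exact ⟨h b, (hsec _ hb0).1, by rw [(hsec _ hb0).2]; exact hb, le_of_eq (hsec _ hb0).2⟩
  · rw [tendsto_atTop]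
    intro b
    rw [eventually_atTop]
    refine ⟨h (max b 0), fun x hx => ?_⟩
    have h1 : (0:ℝ) ≤ h (max b 0) := (hsec _ (le_max_right b 0)).1
    calc b ≤ max b 0 := le_max_left _ _
      _ = g (h (max b 0)) := ((hsec _ (le_max_right b 0)).2).symm
      _ ≤ g x := mono' h1 (h1.trans hx) hx

private lemma stmt12_F_cont (μ : Measure ℝ) [IsProbabilityMeasure μ] {F : ℝ → ℝ}
    (hFeq : ∀ x, F x = (μ (Iic x)).toReal) (hFm : StrictMono F)
    (hatom : ∀ a : ℝ, μ {a} = 0) : Continuous F := by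
  have split : ∀ c a : ℝ, c ≤ a → F a = F c + (μ (Ioc c a)).toReal := by
    intro c a hc
    rw [hFeq, hFeq, ← ENNReal.toReal_add (measure_ne_top μ _) (measure_ne_top μ _),
      ← measure_union (Iic_disjoint_Ioc le_rfl) measurableSet_Ioc, Iic_union_Ioc_eq_Iic hc]
  refine continuous_iff_continuousAt.2 fun a => ?_
  have hL : Tendsto (fun n : ℕ => (μ (Ioc (a - ((n:ℝ)+1)⁻¹) a)).toReal) atTop (𝓝 0) := by
    have hIn : ⋂ n : ℕ, Ioc (a - ((n:ℝ)+1)⁻¹) a = {a} := by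
      ext x
      simp only [mem_iInter, mem_Ioc, mem_singleton_iff]
      constructor
      · intro hx
        refine le_antisymm (hx 0).2 ?_
        by_contra hlt
        push_neg at hlt
        obtain ⟨n, hn⟩ := exists_nat_one_div_lt (sub_pos.2 hlt)
        have := (hx n).1
        rw [one_div] at hn
        linarith
      · rintro rfl
        exact fun n => ⟨sub_lt_self _ (by positivity), le_rfl⟩
    have hT : Tendsto (fun n : ℕ => μ (Ioc (a - ((n:ℝ)+1)⁻¹) a)) atTop (𝓝 (μ {a})) := by
      rw [← hIn]
      exact tendsto_measure_iInter_atTop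
        (fun n => (measurableSet_Ioc).nullMeasurableSet)
        (fun n m hnm => Ioc_subset_Ioc_left (by
          have : ((m:ℝ)+1)⁻¹ ≤ ((n:ℝ)+1)⁻¹ := by
            apply inv_anti₀ (by positivity) (by exact_mod_cast Nat.succ_le_succ hnm)
          linarith))
        ⟨0, measure_ne_top μ _⟩
    rw [hatom a] at hT
    simpa [Function.comp_def] using (ENNReal.tendsto_toReal (by simp)).comp hT
  have hR : Tendsto (fun n : ℕ => (μ (Ioc a (a + ((n:ℝ)+1)⁻¹))).toReal) atTop (𝓝 0) := by
    have hIn : ⋂ n : ℕ, Ioc a (a + ((n:ℝ)+1)⁻¹) = ∅ := by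
      ext x
      simp only [mem_iInter, mem_Ioc, mem_empty_iff_false, iff_false]
      intro hx
      obtain ⟨n, hn⟩ := exists_nat_one_div_lt (sub_pos.2 (hx 0).1)
      have := (hx n).2
      rw [one_div] at hn
      linarith
    have hT : Tendsto (fun n : ℕ => μ (Ioc a (a + ((n:ℝ)+1)⁻¹))) atTop (𝓝 (μ ∅)) := by
      rw [← hIn]
      exact tendsto_measure_iInter_atTop
        (fun n => (measurableSet_Ioc).nullMeasurableSet)
        (fun n m hnm => Ioc_subset_Ioc_right (by
          have : ((m:ℝ)+1)⁻¹ ≤ ((n:ℝ)+1)⁻¹ := by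
            apply inv_anti₀ (by positivity) (by exact_mod_cast Nat.succ_le_succ hnm)
          linarith))
        ⟨0, measure_ne_top μ _⟩
    rw [measure_empty] at hT
    simpa [Function.comp_def] using (ENNReal.tendsto_toReal (by simp)).comp hT
  refine (hFm.strictMonoOn univ).continuousAt_of_exists_between univ_mem
    (fun b hb => ?_) (fun b hb => ?_)
  · obtain ⟨n, hn⟩ := (hL.eventually (eventually_lt_nhds (sub_pos.2 hb))).exists
    have hpos : (0:ℝ) < ((n:ℝ)+1)⁻¹ := by positivity
    refine ⟨a - ((n:ℝ)+1)⁻¹, mem_univ _, ?_, hFm (by linarith)⟩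
    have := split (a - ((n:ℝ)+1)⁻¹) a (by linarith)
    linarith
  · obtain ⟨n, hn⟩ := (hR.eventually (eventually_lt_nhds (sub_pos.2 hb))).exists
    have hpos : (0:ℝ) < ((n:ℝ)+1)⁻¹ := by positivity
    refine ⟨a + ((n:ℝ)+1)⁻¹, mem_univ _, hFm (by linarith), ?_⟩
    have := split a (a + ((n:ℝ)+1)⁻¹) (by linarith)
    linarith

theorem stmt_12 {Ω : Type*} [MeasurableSpace Ω] (P : Measure Ω) [IsProbabilityMeasure P]
    (X : Ω → ℝ) (hX : Measurable X)
    -- `F` is the cdf of `X`; it is absolutely continuous and strictly increasing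
    (F : ℝ → ℝ) (hF : ∀ x, F x = (P {ω | X ω ≤ x}).toReal)
    (habs : Measure.map X P ≪ volume) (hFm : StrictMono F)
    -- `Finv` inverts `F` on `(0,1)`
    (Finv : ℝ → ℝ) (hFinv : ∀ u ∈ Ioo (0:ℝ) 1, F (Finv u) = u)
    -- volatility proxy transformation with change point `μT`
    (μT : ℝ) (T₁ T₂ : ℝ → ℝ)
    (hT₁m : StrictMonoOn T₁ (Ici 0)) (hT₂m : StrictMonoOn T₂ (Ici 0))
    (hT₁c : ContinuousOn T₁ (Ici 0)) (hT₂c : ContinuousOn T₂ (Ici 0))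
    (hT₁d : DifferentiableOn ℝ T₁ (Ici 0)) (hT₂d : DifferentiableOn ℝ T₂ (Ici 0))
    (h00 : T₁ 0 = T₂ 0)
    -- profile function `g = T₂⁻¹ ∘ T₁` on `[0,∞)`, with inverse `ginv = T₁⁻¹ ∘ T₂`
    (g : ℝ → ℝ) (hg : ∀ x ∈ Ici (0:ℝ), 0 ≤ g x ∧ T₂ (g x) = T₁ x)
    (ginv : ℝ → ℝ) (hginv : ∀ x ∈ Ici (0:ℝ), ginv (g x) = x)
    (hginv' : ∀ y ∈ Ici (0:ℝ), 0 ≤ ginv y ∧ g (ginv y) = y)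
    -- the fulcrum `δ = F(μT)` and the constructed v-transform `𝒱`
    (δ : ℝ) (hδ : δ = F μT)
    (calV : ℝ → ℝ)
    (hcalV : ∀ u ∈ Icc (0:ℝ) 1, calV u =
      if u = 0 ∨ u = 1 then 1
      else if u ≤ δ then F (μT + g (μT - Finv u)) - u
      else u - F (μT - ginv (Finv u - μT))) :
    -- (1) `𝒱(0) = 𝒱(1) = 1`
    calV 0 = 1 ∧ calV 1 = 1 ∧
    -- (2) `𝒱(δ) = 0`
    calV δ = 0 ∧
    -- (3) `𝒱` is continuous on `[0,1]`
    ContinuousOn calV (Icc 0 1) ∧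
    -- (4) strictly decreasing on `[0,δ]` and strictly increasing on `[δ,1]`
    StrictAntiOn calV (Icc 0 δ) ∧ StrictMonoOn calV (Icc δ 1) ∧
    -- (5) square property: dual points
    (∀ u ∈ Icc (0:ℝ) 1, u ≠ δ →
      ∃ us ∈ Icc (0:ℝ) 1, ((u < δ ∧ δ < us) ∨ (us < δ ∧ δ < u)) ∧
        calV us = calV u ∧ |us - u| = calV u) := by
  classical
  haveI hμprob : IsProbabilityMeasure (Measure.map X P) :=
    Measure.isProbabilityMeasure_map hX.aemeasurable
  have hFμ : ∀ x, F x = ((Measure.map X P) (Iic x)).toReal := by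
    intro x
    rw [hF x, Measure.map_apply hX measurableSet_Iic]
    rfl
  have hatom : ∀ a : ℝ, (Measure.map X P) {a} = 0 := fun a => habs Real.volume_singleton
  have hFcont : Continuous F := stmt12_F_cont _ hFμ hFm hatom
  have hFc : ∀ x, F x = ProbabilityTheory.cdf (Measure.map X P) x := fun x => by
    rw [hFμ x, ProbabilityTheory.cdf_eq_real, measureReal_def]
  have hF0 : ∀ x, 0 < F x := by
    intro x
    have h1 := ProbabilityTheory.cdf_nonneg (Measure.map X P) (x - 1)
    rw [← hFc] at h1
    exact h1.trans_lt (hFm (by linarith))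
  have hF1 : ∀ x, F x < 1 := by
    intro x
    have h1 := ProbabilityTheory.cdf_le_one (Measure.map X P) (x + 1)
    rw [← hFc] at h1
    exact (hFm (lt_add_one x)).trans_le h1
  have hFbot : Tendsto F atBot (𝓝 0) := by
    have h1 : F = fun x => ProbabilityTheory.cdf (Measure.map X P) x := funext hFc
    rw [h1]
    exact ProbabilityTheory.tendsto_cdf_atBot _
  have hFtop : Tendsto F atTop (𝓝 1) := by
    have h1 : F = fun x => ProbabilityTheory.cdf (Measure.map X P) x := funext hFc
    rw [h1]
    exact ProbabilityTheory.tendsto_cdf_atTop _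
  have hδ0 : 0 < δ := hδ ▸ hF0 μT
  have hδ1 : δ < 1 := hδ ▸ hF1 μT
  -- inverse cdf facts
  have hFiF : ∀ x, Finv (F x) = x := fun x =>
    hFm.injective (hFinv (F x) ⟨hF0 x, hF1 x⟩)
  have hFinv_lt : ∀ u ∈ Ioo (0:ℝ) 1, ∀ x : ℝ, Finv u < x ↔ u < F x := by
    intro u hu x
    constructor
    · intro h
      have h2 := hFm h
      rwa [hFinv u hu] at h2
    · intro h
      by_contra hc
      push_neg at hc
      have h2 := hFm.monotone hc
      rw [hFinv u hu] at h2
      linarith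
  have hFinv_le : ∀ u ∈ Ioo (0:ℝ) 1, ∀ x : ℝ, Finv u ≤ x ↔ u ≤ F x := by
    intro u hu x
    constructor
    · intro h
      have h2 := hFm.monotone h
      rwa [hFinv u hu] at h2
    · intro h
      by_contra hc
      push_neg at hc
      have h2 := hFm hc
      rw [hFinv u hu] at h2
      linarith
  have hFinvδ : Finv δ = μT := by rw [hδ]; exact hFiF μT
  have hFinv_mono : StrictMonoOn Finv (Ioo 0 1) := by
    intro u hu v hv huv
    refine (hFinv_lt u hu (Finv v)).2 ?_
    rw [hFinv v hv]
    exact huv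
  have hFinv_contAt : ∀ u ∈ Ioo (0:ℝ) 1, ContinuousAt Finv u := by
    intro a ha
    refine hFinv_mono.continuousAt_of_exists_between (isOpen_Ioo.mem_nhds ha)
      (fun b hb => ?_) (fun b hb => ?_)
    · refine ⟨F (max b (Finv a - 1)), ⟨hF0 _, hF1 _⟩, ?_, ?_⟩
      · rw [hFiF]; exact le_max_left _ _
      · rw [hFiF]; exact max_lt hb (by linarith)
    · refine ⟨F (min b (Finv a + 1)), ⟨hF0 _, hF1 _⟩, ?_, ?_⟩
      · rw [hFiF]; exact lt_min hb (by linarith)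
      · rw [hFiF]; exact min_le_left _ _
  -- profile function facts
  have hgm : StrictMonoOn g (Ici 0) := by
    intro x hx y hy hxy
    have h1 := hT₁m hx hy hxy
    rw [← (hg x hx).2, ← (hg y hy).2] at h1
    exact (hT₂m.lt_iff_lt (hg x hx).1 (hg y hy).1).1 h1
  have hg0 : g 0 = 0 := by
    have h1 : T₂ (g 0) = T₂ 0 := by rw [(hg 0 self_mem_Ici).2, h00]
    exact hT₂m.injOn (hg 0 self_mem_Ici).1 self_mem_Ici h1
  have hginv0 : ginv 0 = 0 := by
    have h1 := hginv 0 self_mem_Ici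
    rwa [hg0] at h1
  have hgim : StrictMonoOn ginv (Ici 0) := by
    intro x hx y hy hxy
    have h1 : g (ginv x) < g (ginv y) := by
      rw [(hginv' x hx).2, (hginv' y hy).2]; exact hxy
    exact (hgm.lt_iff_lt (hginv' x hx).1 (hginv' y hy).1).1 h1
  obtain ⟨hg_contAt, hg_cw0, hg_top⟩ := stmt12_mono_cont hgm hg0 hginv'
  have hgsec : ∀ y ∈ Ici (0:ℝ), 0 ≤ g y ∧ ginv (g y) = y := fun y hy =>
    ⟨(hg y hy).1, hginv y hy⟩
  obtain ⟨hgi_contAt, hgi_cw0, hgi_top⟩ := stmt12_mono_cont hgim hginv0 hgsec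
  have hgpos : ∀ x : ℝ, 0 < x → 0 < g x := by
    intro x hx
    have h1 := hgm self_mem_Ici hx.le hx
    rwa [hg0] at h1
  have hgipos : ∀ x : ℝ, 0 < x → 0 < ginv x := by
    intro x hx
    have h1 := hgim self_mem_Ici hx.le hx
    rwa [hginv0] at h1
  -- membership helpers
  have hmemL : ∀ u : ℝ, 0 < u → u ≤ δ → u ∈ Ioo (0:ℝ) 1 := fun u h1 h2 =>
    ⟨h1, h2.trans_lt hδ1⟩
  have hmemR : ∀ u : ℝ, δ ≤ u → u < 1 → u ∈ Ioo (0:ℝ) 1 := fun u h1 h2 =>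
    ⟨hδ0.trans_le h1, h2⟩
  have hFinv_leμ : ∀ u : ℝ, 0 < u → u ≤ δ → Finv u ≤ μT := by
    intro u h1 h2
    rw [hFinv_le u (hmemL u h1 h2) μT, ← hδ]
    exact h2
  have hFinv_ltμ : ∀ u : ℝ, 0 < u → u < δ → Finv u < μT := by
    intro u h1 h2
    rw [hFinv_lt u (hmemL u h1 h2.le) μT, ← hδ]
    exact h2
  have hμ_leFinv : ∀ u : ℝ, δ ≤ u → u < 1 → μT ≤ Finv u := by
    intro u h1 h2
    rw [← not_lt]
    rw [hFinv_lt u (hmemR u h1 h2) μT, ← hδ]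
    exact not_lt.2 h1
  have hμ_ltFinv : ∀ u : ℝ, δ < u → u < 1 → μT < Finv u := by
    intro u h1 h2
    have h3 : F μT < F (Finv u) := by
      rw [hFinv u (hmemR u h1.le h2), ← hδ]
      exact h1
    exact hFm.lt_iff_lt.1 h3
  -- branch formulas
  have branchA : ∀ u : ℝ, 0 < u → u ≤ δ → calV u = F (μT + g (μT - Finv u)) - u := by
    intro u h1 h2
    rw [hcalV u ⟨h1.le, h2.trans hδ1.le⟩,
      if_neg (by rintro (rfl | rfl) <;> linarith), if_pos h2]
  have branchB : ∀ u : ℝ, δ < u → u < 1 → calV u = u - F (μT - ginv (Finv u - μT)) := by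
    intro u h1 h2
    rw [hcalV u ⟨(hδ0.trans h1).le, h2.le⟩,
      if_neg (by rintro (rfl | rfl) <;> linarith), if_neg (not_le.2 h1)]
  have hcalV0 : calV 0 = 1 := by
    rw [hcalV 0 ⟨le_rfl, zero_le_one⟩, if_pos (Or.inl rfl)]
  have hcalV1 : calV 1 = 1 := by
    rw [hcalV 1 ⟨zero_le_one, le_rfl⟩, if_pos (Or.inr rfl)]
  have hcalVδ : calV δ = 0 := by
    rw [branchA δ hδ0 le_rfl, hFinvδ, sub_self, hg0, add_zero, ← hδ, sub_self]
  have hBδ : δ - F (μT - ginv (Finv δ - μT)) = 0 := by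
    rw [hFinvδ, sub_self, hginv0, sub_zero, ← hδ, sub_self]
  -- dual point computations
  have dualA : ∀ u : ℝ, 0 < u → u < δ →
      δ < F (μT + g (μT - Finv u)) ∧ F (μT + g (μT - Finv u)) < 1 ∧
      calV (F (μT + g (μT - Finv u))) = F (μT + g (μT - Finv u)) - u ∧
      calV u = F (μT + g (μT - Finv u)) - u := by
    intro u h1 h2
    have hy : 0 < μT - Finv u := sub_pos.2 (hFinv_ltμ u h1 h2)
    have hgy : 0 < g (μT - Finv u) := hgpos _ hy
    have h3 : δ < F (μT + g (μT - Finv u)) := by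
      rw [hδ]; exact hFm (by linarith)
    have h4 : F (μT + g (μT - Finv u)) < 1 := hF1 _
    refine ⟨h3, h4, ?_, branchA u h1 h2.le⟩
    rw [branchB _ h3 h4, hFiF, add_sub_cancel_left, hginv _ hy.le, sub_sub_cancel,
      hFinv u (hmemL u h1 h2.le)]
  have dualB : ∀ u : ℝ, δ < u → u < 1 →
      F (μT - ginv (Finv u - μT)) < δ ∧ 0 < F (μT - ginv (Finv u - μT)) ∧
      calV (F (μT - ginv (Finv u - μT))) = u - F (μT - ginv (Finv u - μT)) ∧
      calV u = u - F (μT - ginv (Finv u - μT)) := by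
    intro u h1 h2
    have ht : 0 < Finv u - μT := sub_pos.2 (hμ_ltFinv u h1 h2)
    have hgt : 0 < ginv (Finv u - μT) := hgipos _ ht
    have h3 : F (μT - ginv (Finv u - μT)) < δ := by
      rw [hδ]; exact hFm (by linarith)
    have h4 : 0 < F (μT - ginv (Finv u - μT)) := hF0 _
    refine ⟨h3, h4, ?_, branchB u h1 h2⟩
    rw [branchA _ h4 h3.le, hFiF, sub_sub_cancel, (hginv' _ ht.le).2]
    have h5 : μT + (Finv u - μT) = Finv u := by ring
    rw [h5, hFinv u (hmemR u h1.le h2)]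
  -- (4) strict antitone on [0, δ]
  have antiOn : StrictAntiOn calV (Icc 0 δ) := by
    intro u₁ hu₁ u₂ hu₂ h12
    rcases eq_or_lt_of_le hu₁.1 with h0 | h0
    · rw [← h0, hcalV0]
      have h2 : 0 < u₂ := by rw [← h0] at h12; exact h12
      rw [branchA u₂ h2 hu₂.2]
      have h3 := hF1 (μT + g (μT - Finv u₂))
      linarith
    · rw [branchA u₁ h0 hu₁.2, branchA u₂ (h0.trans h12) hu₂.2]
      have hm1 : Finv u₁ < Finv u₂ :=
        hFinv_mono (hmemL _ h0 hu₁.2) (hmemL _ (h0.trans h12) hu₂.2) h12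
      have hy₂ : (0:ℝ) ≤ μT - Finv u₂ :=
        sub_nonneg.2 (hFinv_leμ u₂ (h0.trans h12) hu₂.2)
      have hgle : g (μT - Finv u₂) ≤ g (μT - Finv u₁) :=
        hgm.monotoneOn hy₂ (by simp only [mem_Ici]; linarith) (by linarith)
      have hFle : F (μT + g (μT - Finv u₂)) ≤ F (μT + g (μT - Finv u₁)) :=
        hFm.monotone (by linarith)
      linarith
  -- (4) strict monotone on [δ, 1]
  have monoOn : StrictMonoOn calV (Icc δ 1) := by
    intro u₁ hu₁ u₂ hu₂ h12
    rcases eq_or_lt_of_le hu₂.2 with h1 | h1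
    · rw [h1, hcalV1]
      rcases eq_or_lt_of_le hu₁.1 with hd | hd
      · rw [← hd, hcalVδ]; exact one_pos
      · have h2 : u₁ < 1 := by rw [← h1]; exact h12
        rw [branchB u₁ hd h2]
        have h3 := hF0 (μT - ginv (Finv u₁ - μT))
        linarith
    · rcases eq_or_lt_of_le hu₁.1 with hd | hd
      · have h2 : δ < u₂ := by rw [hd]; exact h12
        rw [← hd, hcalVδ, branchB u₂ h2 h1]
        have ht : 0 < Finv u₂ - μT := sub_pos.2 (hμ_ltFinv u₂ h2 h1)
        have hgt : 0 < ginv (Finv u₂ - μT) := hgipos _ ht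
        have hFlt : F (μT - ginv (Finv u₂ - μT)) < F μT := hFm (by linarith)
        rw [← hδ] at hFlt
        linarith
      · rw [branchB u₁ hd (h12.trans h1), branchB u₂ (hd.trans h12) h1]
        have hm1 : Finv u₁ < Finv u₂ :=
          hFinv_mono (hmemR _ hd.le (h12.trans h1)) (hmemR _ (hd.trans h12).le h1) h12
        have ht₁ : (0:ℝ) ≤ Finv u₁ - μT :=
          sub_nonneg.2 (hμ_leFinv u₁ hd.le (h12.trans h1))
        have hgle : ginv (Finv u₁ - μT) ≤ ginv (Finv u₂ - μT) :=
          hgim.monotoneOn ht₁ (by simp only [mem_Ici]; linarith) (by linarith)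
        have hFle : F (μT - ginv (Finv u₂ - μT)) ≤ F (μT - ginv (Finv u₁ - μT)) :=
          hFm.monotone (by linarith)
        linarith
  -- continuity of the branches at interior points
  have contA : ∀ a : ℝ, 0 < a → a < δ →
      ContinuousAt (fun u => F (μT + g (μT - Finv u)) - u) a := by
    intro a h1 h2
    have hFi := hFinv_contAt a (hmemL a h1 h2.le)
    have h3 : ContinuousAt (fun u => μT - Finv u) a := continuousAt_const.sub hFi
    have h4 : ContinuousAt g (μT - Finv a) := hg_contAt _ (sub_pos.2 (hFinv_ltμ a h1 h2))
    have h5 := ContinuousAt.comp (g := g) (f := fun u => μT - Finv u) (x := a) h4 h3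
    exact ((hFcont.continuousAt.comp (continuousAt_const.add h5)).sub
      continuousAt_id : ContinuousAt (fun u => F (μT + g (μT - Finv u)) - u) a)
  have contB : ∀ a : ℝ, δ < a → a < 1 →
      ContinuousAt (fun u => u - F (μT - ginv (Finv u - μT))) a := by
    intro a h1 h2
    have hFi := hFinv_contAt a (hmemR a h1.le h2)
    have h3 : ContinuousAt (fun u => Finv u - μT) a := hFi.sub continuousAt_const
    have h4 : ContinuousAt ginv (Finv a - μT) := hgi_contAt _ (sub_pos.2 (hμ_ltFinv a h1 h2))
    have h5 := ContinuousAt.comp (g := ginv) (f := fun u => Finv u - μT) (x := a) h4 h3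
    exact (continuousAt_id.sub (hFcont.continuousAt.comp (continuousAt_const.sub h5)) :
      ContinuousAt (fun u => u - F (μT - ginv (Finv u - μT))) a)
  -- (3) continuity on [0,1]
  have hcont : ContinuousOn calV (Icc 0 1) := by
    intro a ha
    rcases eq_or_lt_of_le ha.1 with ha0 | ha0
    · -- a = 0
      rw [← ha0]
      have hT : Tendsto calV (𝓝[Icc (0:ℝ) 1 \ {0}] 0) (𝓝 1) := by
        have hev : ∀ᶠ u in 𝓝[Icc (0:ℝ) 1 \ {0}] 0,
            calV u = F (μT + g (μT - Finv u)) - u := by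
          filter_upwards [self_mem_nhdsWithin,
            mem_nhdsWithin_of_mem_nhds (Iio_mem_nhds hδ0)] with u hu1 hu2
          exact branchA u (lt_of_le_of_ne hu1.1.1 (Ne.symm hu1.2)) (le_of_lt hu2)
        have t1 : Tendsto Finv (𝓝[Icc (0:ℝ) 1 \ {0}] 0) atBot := by
          rw [tendsto_atBot]
          intro b
          filter_upwards [self_mem_nhdsWithin,
            mem_nhdsWithin_of_mem_nhds (Iio_mem_nhds (hF0 b))] with u hu1 hu2
          have hu01 : u ∈ Ioo (0:ℝ) 1 :=
            ⟨lt_of_le_of_ne hu1.1.1 (Ne.symm hu1.2), hu2.trans (hF1 b)⟩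
          exact le_of_lt ((hFinv_lt u hu01 b).2 hu2)
        have t2 : Tendsto (fun u => μT - Finv u) (𝓝[Icc (0:ℝ) 1 \ {0}] 0) atTop := by
          simpa [sub_eq_add_neg] using
            tendsto_atTop_add_const_left _ μT (tendsto_neg_atBot_atTop.comp t1)
        have t3 : Tendsto (fun u => g (μT - Finv u)) (𝓝[Icc (0:ℝ) 1 \ {0}] 0) atTop :=
          hg_top.comp t2
        have t4 : Tendsto (fun u => F (μT + g (μT - Finv u))) (𝓝[Icc (0:ℝ) 1 \ {0}] 0)
            (𝓝 1) := hFtop.comp (tendsto_atTop_add_const_left _ μT t3)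
        have t5 : Tendsto (fun u : ℝ => u) (𝓝[Icc (0:ℝ) 1 \ {0}] 0) (𝓝 0) :=
          tendsto_id.mono_left nhdsWithin_le_nhds
        have t6 := t4.sub t5
        rw [sub_zero] at t6
        exact t6.congr' (hev.mono fun u hu => hu.symm)
      have hT' : Tendsto calV (𝓝[Icc (0:ℝ) 1 \ {0}] 0) (𝓝 (calV 0)) := by
        rw [hcalV0]; exact hT
      exact continuousWithinAt_diff_self.1 hT'
    rcases eq_or_lt_of_le ha.2 with ha1 | ha1
    · -- a = 1
      rw [ha1]
      have hT : Tendsto calV (𝓝[Icc (0:ℝ) 1 \ {1}] 1) (𝓝 1) := by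
        have hev : ∀ᶠ u in 𝓝[Icc (0:ℝ) 1 \ {1}] 1,
            calV u = u - F (μT - ginv (Finv u - μT)) := by
          filter_upwards [self_mem_nhdsWithin,
            mem_nhdsWithin_of_mem_nhds (Ioi_mem_nhds hδ1)] with u hu1 hu2
          exact branchB u hu2 (lt_of_le_of_ne hu1.1.2 hu1.2)
        have t1 : Tendsto Finv (𝓝[Icc (0:ℝ) 1 \ {1}] 1) atTop := by
          rw [tendsto_atTop]
          intro b
          filter_upwards [self_mem_nhdsWithin,
            mem_nhdsWithin_of_mem_nhds (Ioi_mem_nhds (hF1 b))] with u hu1 hu2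
          have hu01 : u ∈ Ioo (0:ℝ) 1 :=
            ⟨(hF0 b).trans hu2, lt_of_le_of_ne hu1.1.2 hu1.2⟩
          exact le_of_not_gt fun h => absurd ((hFinv_lt u hu01 b).1 h) (not_lt.2 hu2.le)
        have t2 : Tendsto (fun u => Finv u - μT) (𝓝[Icc (0:ℝ) 1 \ {1}] 1) atTop := by
          simpa [sub_eq_add_neg] using tendsto_atTop_add_const_right _ (-μT) t1
        have t3 : Tendsto (fun u => ginv (Finv u - μT)) (𝓝[Icc (0:ℝ) 1 \ {1}] 1) atTop :=
          hgi_top.comp t2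
        have t4 : Tendsto (fun u => μT - ginv (Finv u - μT)) (𝓝[Icc (0:ℝ) 1 \ {1}] 1)
            atBot := by
          simpa [sub_eq_add_neg] using
            tendsto_atBot_add_const_left _ μT (tendsto_neg_atTop_atBot.comp t3)
        have t5 : Tendsto (fun u => F (μT - ginv (Finv u - μT))) (𝓝[Icc (0:ℝ) 1 \ {1}] 1)
            (𝓝 0) := hFbot.comp t4
        have t6 : Tendsto (fun u : ℝ => u) (𝓝[Icc (0:ℝ) 1 \ {1}] 1) (𝓝 1) :=
          tendsto_id.mono_left nhdsWithin_le_nhds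
        have t7 := t6.sub t5
        rw [sub_zero] at t7
        exact t7.congr' (hev.mono fun u hu => hu.symm)
      have hT' : Tendsto calV (𝓝[Icc (0:ℝ) 1 \ {1}] 1) (𝓝 (calV 1)) := by
        rw [hcalV1]; exact hT
      exact continuousWithinAt_diff_self.1 hT'
    rcases lt_trichotomy a δ with hd | hd | hd
    · -- 0 < a < δ
      have hev : (fun u => F (μT + g (μT - Finv u)) - u) =ᶠ[𝓝 a] calV := by
        filter_upwards [Ioo_mem_nhds ha0 hd] with u hu
        exact (branchA u hu.1 hu.2.le).symm
      exact ((contA a ha0 hd).congr hev).continuousWithinAt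
    · -- a = δ
      rw [hd]
      have hsub : Icc (0:ℝ) 1 ⊆ Icc 0 δ ∪ Icc δ 1 := fun x hx =>
        (le_total x δ).imp (fun h => ⟨hx.1, h⟩) (fun h => ⟨h, hx.2⟩)
      refine (ContinuousWithinAt.union ?_ ?_).mono hsub
      · -- within Icc 0 δ at δ
        rw [← continuousWithinAt_inter (Ioi_mem_nhds (half_lt_self hδ0))]
        have hcw : ContinuousWithinAt (fun u => F (μT + g (μT - Finv u)) - u)
            (Icc 0 δ ∩ Ioi (δ/2)) δ := by
          have hFi : ContinuousWithinAt Finv (Icc 0 δ ∩ Ioi (δ/2)) δ :=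
            (hFinv_contAt δ ⟨hδ0, hδ1⟩).continuousWithinAt
          have h3 : ContinuousWithinAt (fun u => μT - Finv u) (Icc 0 δ ∩ Ioi (δ/2)) δ :=
            continuousWithinAt_const.sub hFi
          have h4 : ContinuousWithinAt g (Ici 0) (μT - Finv δ) := by
            rw [hFinvδ, sub_self]; exact hg_cw0
          have hmaps : MapsTo (fun u => μT - Finv u) (Icc 0 δ ∩ Ioi (δ/2)) (Ici 0) :=
            fun u hu => mem_Ici.2
              (sub_nonneg.2 (hFinv_leμ u (lt_trans (half_pos hδ0) hu.2) hu.1.2))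
          have h5 := ContinuousWithinAt.comp (g := g) (f := fun u => μT - Finv u) (x := δ) h4 h3 hmaps
          exact ((hFcont.continuousAt.comp_continuousWithinAt
            (continuousWithinAt_const.add h5))).sub continuousWithinAt_id
        exact hcw.congr
          (fun u hu => branchA u (lt_trans (half_pos hδ0) hu.2) hu.1.2)
          (branchA δ hδ0 le_rfl)
      · -- within Icc δ 1 at δ
        rw [← continuousWithinAt_inter (Iio_mem_nhds (show δ < (δ+1)/2 by linarith))]
        have hlt1 : ∀ u : ℝ, u ∈ Icc δ 1 ∩ Iio ((δ+1)/2) → u < 1 :=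
          fun u hu => lt_of_lt_of_le hu.2 (by linarith)
        have hcw : ContinuousWithinAt (fun u => u - F (μT - ginv (Finv u - μT)))
            (Icc δ 1 ∩ Iio ((δ+1)/2)) δ := by
          have hFi : ContinuousWithinAt Finv (Icc δ 1 ∩ Iio ((δ+1)/2)) δ :=
            (hFinv_contAt δ ⟨hδ0, hδ1⟩).continuousWithinAt
          have h3 : ContinuousWithinAt (fun u => Finv u - μT) (Icc δ 1 ∩ Iio ((δ+1)/2)) δ :=
            hFi.sub continuousWithinAt_const
          have h4 : ContinuousWithinAt ginv (Ici 0) (Finv δ - μT) := by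
            rw [hFinvδ, sub_self]; exact hgi_cw0
          have hmaps : MapsTo (fun u => Finv u - μT) (Icc δ 1 ∩ Iio ((δ+1)/2)) (Ici 0) :=
            fun u hu => mem_Ici.2 (sub_nonneg.2 (hμ_leFinv u hu.1.1 (hlt1 u hu)))
          have h5 := ContinuousWithinAt.comp (g := ginv) (f := fun u => Finv u - μT) (x := δ) h4 h3 hmaps
          exact continuousWithinAt_id.sub (hFcont.continuousAt.comp_continuousWithinAt
            (continuousWithinAt_const.sub h5))
        refine hcw.congr (fun u hu => ?_) (by rw [hcalVδ, hBδ])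
        rcases eq_or_lt_of_le hu.1.1 with h | h
        · rw [← h, hcalVδ, hBδ]
        · exact branchB u h (hlt1 u hu)
    · -- δ < a < 1
      have hev : (fun u => u - F (μT - ginv (Finv u - μT))) =ᶠ[𝓝 a] calV := by
        filter_upwards [Ioo_mem_nhds hd ha1] with u hu
        exact (branchB u hu.1 hu.2).symm
      exact ((contB a hd ha1).congr hev).continuousWithinAt
  -- (5) square property
  refine ⟨hcalV0, hcalV1, hcalVδ, hcont, antiOn, monoOn, ?_⟩
  intro u hu hne
  rcases eq_or_lt_of_le hu.1 with h0 | h0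
  · refine ⟨1, ⟨zero_le_one, le_rfl⟩, Or.inl ⟨by rw [← h0]; exact hδ0, hδ1⟩, ?_, ?_⟩
    · rw [hcalV1, ← h0, hcalV0]
    · rw [← h0, hcalV0]; norm_num
  rcases eq_or_lt_of_le hu.2 with h1 | h1
  · refine ⟨0, ⟨le_rfl, zero_le_one⟩, Or.inr ⟨hδ0, by rw [h1]; exact hδ1⟩, ?_, ?_⟩
    · rw [hcalV0, h1, hcalV1]
    · rw [h1, hcalV1]; norm_num
  rcases lt_or_gt_of_ne hne with hlt | hgt
  · obtain ⟨h3, h4, hB, hA⟩ := dualA u h0 hlt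
    refine ⟨F (μT + g (μT - Finv u)), ⟨by linarith, h4.le⟩, Or.inl ⟨hlt, h3⟩,
      by rw [hB, hA], ?_⟩
    rw [hA, abs_of_nonneg (by linarith)]
  · obtain ⟨h3, h4, hA, hB⟩ := dualB u hgt h1
    refine ⟨F (μT - ginv (Finv u - μT)), ⟨h4.le, by linarith⟩, Or.inr ⟨h3, hgt⟩,
      by rw [hA, hB], ?_⟩
    rw [hB, abs_of_nonpos (by linarith), neg_sub]
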